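/- For every real x, the expression e^{6x}(5x² + x) + e^{4x}(−12x² + 6x − 12) + e^{2x}(15x² + 17x + 12) is nonnegative. -/

import Mathlib

open Real

/-- auxiliary: for `0 ≤ t`, `exp t * (1 - t + t^2/2 - t^3/6) ≤ 1`. -/
lemma expP3 (t : ℝ) (ht : 0 ≤ t) :
    Real.exp t * (1 - t + t^2/2 - t^3/6) ≤ 1 := by
  have hanti : AntitoneOn (fun s : ℝ => Real.exp s * (1 - s + s^2/2 - s^3/6)) (Set.Ici 0) := by
    apply antitoneOn_of_deriv_nonpos (convex_Ici 0)
    · fun_prop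
    · fun_prop
    · intro s hs
      rw [interior_Ici] at hs
      have h1 : HasDerivAt (fun s : ℝ => Real.exp s * (1 - s + s^2/2 - s^3/6))
          (Real.exp s * (1 - s + s^2/2 - s^3/6) + Real.exp s * (-1 + 2*s/2 - 3*s^2/6)) s := by
        have := ((Real.hasDerivAt_exp s).mul
          (((hasDerivAt_id s).const_sub 1 |>.add ((hasDerivAt_pow 2 s).div_const 2)).sub
            ((hasDerivAt_pow 3 s).div_const 6)))
        convert this using 1
        · rfl
        · rfl
        · funext y; simp [id_eq]
        · simp [id_eq]
      rw [h1.deriv]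
      have hs' : (0:ℝ) < s := hs
      nlinarith [Real.exp_pos s, pow_pos hs' 3]
  have := hanti (Set.self_mem_Ici) (Set.mem_Ici.mpr ht) ht
  simpa using this
set_option maxHeartbeats 1000000 in
theorem C2_nonneg :
    ∀ x : ℝ, 0 ≤ Real.exp (6*x) * (5*x^2 + x) + Real.exp (4*x) * (-12*x^2 + 6*x - 12)
      + Real.exp (2*x) * (15*x^2 + 17*x + 12) := by
  intro x
  rcases le_or_gt x 0 with hx | hx
  · -- x ≤ 0 : work with u = exp (2x)
    set u := Real.exp (2*x) with hu
    have hupos : 0 < u := Real.exp_pos _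
    have h1 : 1 + 2*x ≤ u := by
      have := Real.add_one_le_exp (2*x); linarith
    have hinv : u * Real.exp (-(2*x)) = 1 := by
      rw [hu, ← Real.exp_add]; simp
    have hsum : 1 - 2*x + 2*x^2 - 4*x^3/3 ≤ Real.exp (-(2*x)) := by
      have h := Real.sum_le_exp_of_nonneg (x := -(2*x)) (by linarith) 4
      norm_num [Finset.sum_range_succ, Nat.factorial] at h
      nlinarith [h]
    have h2 : u * (1 - 2*x + 2*x^2 - 4*x^3/3) ≤ 1 := by
      calc u * (1 - 2*x + 2*x^2 - 4*x^3/3) ≤ u * Real.exp (-(2*x)) :=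
            mul_le_mul_of_nonneg_left hsum hupos.le
        _ = 1 := hinv
    have h6 : Real.exp (6*x) = u^3 := by
      rw [hu, pow_succ, pow_two, ← Real.exp_add, ← Real.exp_add]
      congr 1; ring
    have h4 : Real.exp (4*x) = u^2 := by
      rw [hu, pow_two, ← Real.exp_add]
      congr 1; ring
    rw [h6, h4]
    have key : 0 ≤ u^2 * (5*x^2 + x) + u * (-12*x^2 + 6*x - 12) + (15*x^2 + 17*x + 12) := by
      nlinarith [sq_nonneg (u - 1 - 2*x), sq_nonneg x, sq_nonneg (u*x), sq_nonneg (u - 1),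
        mul_pos hupos hupos, sq_nonneg (u + 2*x), sq_nonneg (u*x + x), sq_nonneg (u*x - x),
        mul_nonneg (mul_nonneg hupos.le hupos.le) (sq_nonneg x)]
    nlinarith [mul_nonneg hupos.le key]
  · -- 0 < x : work with v = exp (-(2x))
    set v := Real.exp (-(2*x)) with hv
    have hvpos : 0 < v := Real.exp_pos _
    have hinv : v * Real.exp (2*x) = 1 := by
      rw [hv, ← Real.exp_add]; simp
    have h1 : 1 - 2*x + 2*x^2 - 4*x^3/3 ≤ v := by
      have h := expP3 (2*x) (by linarith)
      have step : v * (Real.exp (2*x) * (1 - 2*x + (2*x)^2/2 - (2*x)^3/6)) ≤ v * 1 :=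
        mul_le_mul_of_nonneg_left h hvpos.le
      rw [← mul_assoc, hinv, one_mul, mul_one] at step
      ring_nf at step ⊢
      linarith
    have h2 : v * (1 + 2*x) ≤ 1 := by
      have h := Real.add_one_le_exp (2*x)
      have step : v * (2*x + 1) ≤ v * Real.exp (2*x) :=
        mul_le_mul_of_nonneg_left h hvpos.le
      rw [hinv] at step
      linarith
    have key : 0 ≤ (5*x^2 + x) + v * (-12*x^2 + 6*x - 12) + v^2 * (15*x^2 + 17*x + 12) := by
      have hA : 0 ≤ v - (1 - 2*x + 2*x^2 - 4*x^3/3) := by linarith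
      have hB : 0 ≤ 1 - v*(1+2*x) := by linarith
      nlinarith [mul_nonneg hA hB, mul_nonneg (mul_nonneg hA hx.le) hx.le,
        mul_nonneg (mul_nonneg hB hx.le) hx.le, mul_nonneg hA hx.le, mul_nonneg hB hx.le,
        sq_nonneg (v*(1+2*x) - 1), sq_nonneg (v - 1 + 2*x), mul_pos hvpos hx,
        mul_nonneg (mul_nonneg hA hvpos.le) hx.le, sq_nonneg x, sq_nonneg (v-1)]
    have e4 : Real.exp (4*x) = Real.exp (6*x) * v := by
      rw [hv, ← Real.exp_add]; congr 1; ring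
    have e2 : Real.exp (2*x) = Real.exp (6*x) * v^2 := by
      rw [hv, pow_two, ← Real.exp_add, ← Real.exp_add]; congr 1; ring
    rw [e4, e2]
    have := mul_nonneg (Real.exp_pos (6*x)).le key
    nlinarith [this]
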